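/- Let (Ω, F, ℙ) be a probability space, (E, ℰ) a measurable space, and (X_i)_{i≥1} an i.i.d. sequence of E-valued random variables with common distribution μ. Let A ⊆ ℝ^d be compact with θ* ∈ A, and let ℓ : ℝ^d × E → ℝ be jointly measurable with θ ↦ ℓ(θ, x) continuous on A for every x ∈ E. Assume that h(x) := sup_{θ ∈ A} |ℓ(θ, x)| is measurable and μ-integrable. Let (ν_n) be Borel probability measures on ℝ^d with ν_n(A) = 1 for every n, converging weakly to the Dirac measure δ_{θ*}. Then ℙ-almost surely, (1/n) Σ_{i=1}^n ∫_{ℝ^d} ℓ(θ, X_i) dν_n(θ) → ∫_E ℓ(θ*, x) dμ(x) as n → ∞. -/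

import Mathlib

open MeasureTheory ProbabilityTheory Filter

section Aux

variable {E : Type*} [MeasurableSpace E] {d : ℕ}

/-- Measurability of a parametrized supremum over a compact set, via a countable dense subset. -/
lemma measurable_sSup_image_of_compact
    {f : EuclideanSpace ℝ (Fin d) → E → ℝ} (hf : Measurable (Function.uncurry f))
    {s : Set (EuclideanSpace ℝ (Fin d))} (hsc : IsCompact s) (hs : s.Nonempty)
    (hcont : ∀ x, ContinuousOn (fun θ => f θ x) s) :
    Measurable fun x => sSup ((fun θ => f θ x) '' s) := by
  obtain ⟨D, Dcount, Ddense⟩ := TopologicalSpace.exists_countable_dense (↥s)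
  set D' : Set (EuclideanSpace ℝ (Fin d)) := Subtype.val '' D with hD'
  have hsub : D' ⊆ s := by
    rintro θ ⟨⟨θ', hθ'⟩, -, rfl⟩
    exact hθ'
  have hclos : s ⊆ closure D' := by
    intro θ hθ
    have h1 : (⟨θ, hθ⟩ : ↥s) ∈ closure D := by
      rw [Ddense.closure_eq]; trivial
    have := image_closure_subset_closure_image (f := (Subtype.val : ↥s → _))
      continuous_subtype_val (Set.mem_image_of_mem _ h1)
    exact this
  have hD'ne : D'.Nonempty := by
    by_contra hne
    rw [Set.not_nonempty_iff_eq_empty] at hne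
    obtain ⟨θ, hθ⟩ := hs
    have := hclos hθ
    simp [hne] at this
  haveI : Countable ↥D' := (Dcount.image _).to_subtype
  haveI : Nonempty ↥D' := hD'ne.to_subtype
  have key : ∀ x, sSup ((fun θ => f θ x) '' s) = ⨆ θ : ↥D', f ↑θ x := by
    intro x
    have hrange : Set.range (fun θ : ↥D' => f ↑θ x) = (fun θ => f θ x) '' D' := by
      rw [show (fun θ : ↥D' => f ↑θ x) = (fun θ => f θ x) ∘ (Subtype.val : ↥D' → _) from rfl,
        Set.range_comp, Subtype.range_coe]
    have bdd : BddAbove ((fun θ => f θ x) '' s) :=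
      (hsc.image_of_continuousOn (hcont x)).bddAbove
    rw [iSup, hrange]
    refine le_antisymm ?_ (csSup_le_csSup bdd (hD'ne.image _) (Set.image_mono hsub))
    refine csSup_le (hs.image _) ?_
    rintro y ⟨θ, hθ, rfl⟩
    have hmem : f θ x ∈ closure ((fun θ => f θ x) '' D') :=
      (((hcont x) θ hθ).mono hsub).mem_closure_image (hclos hθ)
    have hcl : closure ((fun θ => f θ x) '' D') ⊆ Set.Iic (sSup ((fun θ => f θ x) '' D')) :=
      closure_minimal (fun y hy => le_csSup (bdd.mono (Set.image_mono hsub)) hy) isClosed_Iic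
    exact hcl hmem
  simp_rw [key]
  exact Measurable.iSup fun θ => hf.comp (measurable_prodMk_left)

end Aux

/-- **Strong law of large numbers for the GVI triangular array under independence.**
Let `(Ω, ℙ)` be a probability space, `(X_i)_{i ≥ 1}` i.i.d. `E`-valued with common law
`μ`.  Let `A ⊆ ℝ^d` be compact with `θs ∈ A`, `ℓ : ℝ^d × E → ℝ` jointly measurable and
continuous in `θ` on `A` for each `x`, and `h x = sup_{θ ∈ A} |ℓ(θ, x)|` measurable and
`μ`-integrable.  Let `(ν_n)` be Borel probability measures on `ℝ^d` with `ν_n A = 1`,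
converging weakly to `δ_{θs}`.  Then `ℙ`-a.s.,
`(1/n) ∑_{i=1}^n ∫ ℓ(θ, X_i) dν_n(θ) → ∫ ℓ(θs, x) dμ(x)`. -/
theorem gvi_triangular_slln_iid
    {Ω : Type*} [MeasurableSpace Ω] (P : Measure Ω) [IsProbabilityMeasure P]
    {E : Type*} [MeasurableSpace E]
    (μ : Measure E) [IsProbabilityMeasure μ]
    (X : ℕ → Ω → E) (hXmeas : ∀ i, Measurable (X i))
    (hXindep : iIndepFun X P)
    (hXdist : ∀ i, Measure.map (X i) P = μ)
    {d : ℕ} (A : Set (EuclideanSpace ℝ (Fin d))) (hA : IsCompact A)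
    (θs : EuclideanSpace ℝ (Fin d)) (hθs : θs ∈ A)
    (ℓ : EuclideanSpace ℝ (Fin d) → E → ℝ)
    (hℓmeas : Measurable (Function.uncurry ℓ))
    (hℓcont : ∀ x, ContinuousOn (fun θ => ℓ θ x) A)
    (hsupmeas : Measurable fun x => sSup ((fun θ => |ℓ θ x|) '' A))
    (hsupint : Integrable (fun x => sSup ((fun θ => |ℓ θ x|) '' A)) μ)
    (ν : ℕ → ProbabilityMeasure (EuclideanSpace ℝ (Fin d)))
    (hνA : ∀ n, (ν n : Measure (EuclideanSpace ℝ (Fin d))) A = 1)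
    (hνlim : Tendsto ν atTop
      (nhds (⟨Measure.dirac θs, inferInstance⟩ : ProbabilityMeasure (EuclideanSpace ℝ (Fin d))))) :
    ∀ᵐ ω ∂P,
      Tendsto
        (fun n : ℕ => (1 / (n : ℝ)) *
          ∑ i ∈ Finset.Icc 1 n, ∫ θ, ℓ θ (X i ω) ∂(ν n : Measure (EuclideanSpace ℝ (Fin d))))
        atTop (nhds (∫ x, ℓ θs x ∂μ)) := by
  classical
  set h : E → ℝ := fun x => sSup ((fun θ => |ℓ θ x|) '' A) with hh
  set f : EuclideanSpace ℝ (Fin d) → E → ℝ := fun θ x => |ℓ θ x - ℓ θs x| with hf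
  set r : ℕ → ℝ := fun k => 1 / ((k : ℝ) + 1) with hr
  have hrpos : ∀ k, 0 < r k := fun k => by positivity
  set K : ℕ → Set (EuclideanSpace ℝ (Fin d)) :=
    fun k => A ∩ Metric.closedBall θs (r k) with hK
  set G : ℕ → E → ℝ := fun k x => sSup ((fun θ => f θ x) '' K k) with hG
  set C : ℕ → Set (EuclideanSpace ℝ (Fin d)) := fun k => (Metric.ball θs (r k))ᶜ with hC
  -- basic facts
  have hAne : A.Nonempty := ⟨θs, hθs⟩
  have hbddA : ∀ x, BddAbove ((fun θ => |ℓ θ x|) '' A) := fun x =>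
    (hA.image_of_continuousOn (hℓcont x).abs).bddAbove
  have hle_h : ∀ x, ∀ θ ∈ A, |ℓ θ x| ≤ h x := fun x θ hθ =>
    le_csSup (hbddA x) (Set.mem_image_of_mem _ hθ)
  have h_nonneg : ∀ x, 0 ≤ h x := fun x => (abs_nonneg _).trans (hle_h x θs hθs)
  have hfbound : ∀ x, ∀ θ ∈ A, f θ x ≤ 2 * h x := by
    intro x θ hθ
    calc f θ x ≤ |ℓ θ x| + |ℓ θs x| := abs_sub _ _
    _ ≤ h x + h x := add_le_add (hle_h x θ hθ) (hle_h x θs hθs)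
    _ = 2 * h x := by ring
  have hKc : ∀ k, IsCompact (K k) := fun k => hA.inter_right Metric.isClosed_closedBall
  have hθsK : ∀ k, θs ∈ K k := fun k => ⟨hθs, Metric.mem_closedBall_self (hrpos k).le⟩
  have hfcont : ∀ x k, ContinuousOn (fun θ => f θ x) (K k) :=
    fun x k => (((hℓcont x).sub continuousOn_const).abs).mono Set.inter_subset_left
  have hbddK : ∀ x k, BddAbove ((fun θ => f θ x) '' K k) := fun x k =>
    ((hKc k).image_of_continuousOn (hfcont x k)).bddAbove
  have hG_nonneg : ∀ k x, 0 ≤ G k x := by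
    intro k x
    have : f θs x = 0 := by simp [hf]
    have := le_csSup (hbddK x k) (Set.mem_image_of_mem (fun θ => f θ x) (hθsK k))
    simpa [hf] using this
  have hG_le : ∀ k x, G k x ≤ 2 * h x := by
    intro k x
    refine csSup_le ((Set.nonempty_of_mem (hθsK k)).image _) ?_
    rintro y ⟨θ, hθ, rfl⟩
    exact hfbound x θ hθ.1
  have hfle_G : ∀ k x, ∀ θ ∈ K k, f θ x ≤ G k x := fun k x θ hθ =>
    le_csSup (hbddK x k) (Set.mem_image_of_mem _ hθ)
  have hfmeas : Measurable (Function.uncurry f) := by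
    have : Function.uncurry f = fun p : (EuclideanSpace ℝ (Fin d)) × E =>
        |Function.uncurry ℓ p - ℓ θs p.2| := rfl
    rw [this]
    exact (hℓmeas.sub (hℓmeas.comp (measurable_const.prodMk measurable_snd))).abs
  have hGmeas : ∀ k, Measurable (G k) := fun k =>
    measurable_sSup_image_of_compact hfmeas (hKc k) ⟨θs, hθsK k⟩ (hfcont · k)
  have hGint : ∀ k, Integrable (G k) μ := by
    intro k
    refine Integrable.mono' (hsupint.const_mul 2) (hGmeas k).aestronglyMeasurable ?_
    filter_upwards with x
    rw [Real.norm_eq_abs, abs_of_nonneg (hG_nonneg k x)]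
    exact hG_le k x
  -- pointwise convergence of G in k, and of its integrals
  have hGtendsto : ∀ x, Tendsto (fun k => G k x) atTop (nhds 0) := by
    intro x
    rw [Metric.tendsto_atTop]
    intro ε εpos
    have hcw : ContinuousWithinAt (fun θ => f θ x) A θs :=
      ((hℓcont x).sub continuousOn_const).abs θs hθs
    rw [Metric.continuousWithinAt_iff] at hcw
    obtain ⟨δ, δpos, hδ⟩ := hcw (ε / 2) (by positivity)
    obtain ⟨N, hN⟩ := exists_nat_gt (1 / δ)
    refine ⟨N, fun k hk => ?_⟩
    have hrk : r k < δ := by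
      have hkN : (1 : ℝ) / δ < (k : ℝ) + 1 :=
        lt_of_lt_of_le hN (by exact_mod_cast Nat.le_succ_of_le hk)
      rw [div_lt_iff₀ δpos] at hkN
      show (1 : ℝ) / ((k : ℝ) + 1) < δ
      rw [div_lt_iff₀ (by positivity)]
      nlinarith
    have hGk : G k x ≤ ε / 2 := by
      refine csSup_le ((Set.nonempty_of_mem (hθsK k)).image _) ?_
      rintro y ⟨θ, hθ, rfl⟩
      have hd : dist θ θs < δ := lt_of_le_of_lt (Metric.mem_closedBall.mp hθ.2) hrk
      have := hδ hθ.1 hd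
      have hfθs : f θs x = 0 := by simp [hf]
      rw [Real.dist_eq, hfθs, sub_zero, abs_of_nonneg (abs_nonneg _)] at this
      exact this.le
    rw [Real.dist_eq, sub_zero, abs_of_nonneg (hG_nonneg k x)]
    linarith
  have hIGtendsto : Tendsto (fun k => ∫ x, G k x ∂μ) atTop (nhds 0) := by
    have := tendsto_integral_of_dominated_convergence (μ := μ)
      (F := fun k x => G k x) (f := fun _ => (0 : ℝ)) (bound := fun x => 2 * h x)
      (fun k => (hGmeas k).aestronglyMeasurable) (hsupint.const_mul 2)
      (fun k => by
        filter_upwards with x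
        rw [Real.norm_eq_abs, abs_of_nonneg (hG_nonneg k x)]
        exact hG_le k x)
      (by filter_upwards with x using hGtendsto x)
    simpa using this
  -- ν n lives a.e. on A, integrability in θ
  have hAmeas : MeasurableSet A := hA.isClosed.measurableSet
  have haeA : ∀ n, ∀ᵐ θ ∂(ν n : Measure (EuclideanSpace ℝ (Fin d))), θ ∈ A := by
    intro n
    rw [ae_iff]
    have : {θ | ¬ θ ∈ A} = Aᶜ := rfl
    rw [this, measure_compl hAmeas (measure_ne_top _ _), hνA n, measure_univ]
    simp
  have hθmeas : ∀ x, Measurable (fun θ => ℓ θ x) := fun x =>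
    hℓmeas.comp (measurable_id.prodMk measurable_const)
  have hθint : ∀ n x, Integrable (fun θ => ℓ θ x)
      (ν n : Measure (EuclideanSpace ℝ (Fin d))) := by
    intro n x
    refine Integrable.mono' (integrable_const (h x)) (hθmeas x).aestronglyMeasurable ?_
    filter_upwards [haeA n] with θ hθ
    exact hle_h x θ hθ
  have hCmeas : ∀ k, MeasurableSet (C k) := fun k =>
    Metric.isOpen_ball.measurableSet.compl
  -- key pointwise bound
  have hkey : ∀ n k x,
      |(∫ θ, ℓ θ x ∂(ν n : Measure (EuclideanSpace ℝ (Fin d)))) - ℓ θs x| ≤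
        G k x + 2 * h x * ((ν n : Measure (EuclideanSpace ℝ (Fin d))) (C k)).toReal := by
    intro n k x
    have hsub : (∫ θ, ℓ θ x ∂(ν n : Measure (EuclideanSpace ℝ (Fin d)))) - ℓ θs x =
        ∫ θ, (ℓ θ x - ℓ θs x) ∂(ν n : Measure (EuclideanSpace ℝ (Fin d))) := by
      rw [integral_sub (hθint n x) (integrable_const _), integral_const]
      simp
    rw [hsub]
    have hbnd : ∀ᵐ θ ∂(ν n : Measure (EuclideanSpace ℝ (Fin d))),
        ‖ℓ θ x - ℓ θs x‖ ≤ G k x + (C k).indicator (fun _ => 2 * h x) θ := by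
      filter_upwards [haeA n] with θ hθ
      rw [Real.norm_eq_abs]
      by_cases hmem : θ ∈ C k
      · rw [Set.indicator_of_mem hmem]
        have : |ℓ θ x - ℓ θs x| ≤ 2 * h x := hfbound x θ hθ
        linarith [hG_nonneg k x]
      · rw [Set.indicator_of_notMem hmem]
        have hθK : θ ∈ K k := by
          refine ⟨hθ, ?_⟩
          simp only [hC, Set.mem_compl_iff, not_not] at hmem
          exact Metric.ball_subset_closedBall hmem
        have := hfle_G k x θ hθK
        simpa [hf] using this.trans (by linarith : G k x ≤ G k x + 0)
    have hint2 : Integrable (fun θ => G k x + (C k).indicator (fun _ => 2 * h x) θ)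
        (ν n : Measure (EuclideanSpace ℝ (Fin d))) :=
      (integrable_const _).add ((integrable_const _).indicator (hCmeas k))
    have := norm_integral_le_of_norm_le hint2 hbnd
    rw [Real.norm_eq_abs] at this
    refine this.trans ?_
    rw [integral_add (integrable_const _) ((integrable_const _).indicator (hCmeas k)),
      integral_const, integral_indicator_const _ (hCmeas k)]
    simp [mul_comm]
    exact le_rfl
  -- portmanteau : mass escaping the balls vanishes
  have hCtendsto : ∀ k, Tendsto
      (fun n => ((ν n : Measure (EuclideanSpace ℝ (Fin d))) (C k)).toReal) atTop (nhds 0) := by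
    intro k
    have hdirac : ((⟨Measure.dirac θs, inferInstance⟩ :
        ProbabilityMeasure (EuclideanSpace ℝ (Fin d))) :
        Measure (EuclideanSpace ℝ (Fin d))) (C k) = 0 := by
      show Measure.dirac θs (C k) = 0
      rw [Measure.dirac_apply' _ (hCmeas k)]
      have : θs ∉ C k := by
        simp [hC, Metric.mem_ball_self (hrpos k)]
      simp [Set.indicator_of_notMem this]
    have hlimsup := ProbabilityMeasure.limsup_measure_closed_le_of_tendsto hνlim
      (F := C k) Metric.isOpen_ball.isClosed_compl
    replace hlimsup : limsup (fun n => ((ν n : Measure (EuclideanSpace ℝ (Fin d))) (C k)))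
        atTop ≤ 0 := hlimsup.trans (le_of_eq hdirac)
    have hls : limsup (fun n => ((ν n : Measure (EuclideanSpace ℝ (Fin d))) (C k))) atTop = 0 :=
      le_antisymm hlimsup zero_le
    have hli : liminf (fun n => ((ν n : Measure (EuclideanSpace ℝ (Fin d))) (C k))) atTop = 0 :=
      le_antisymm (le_trans (liminf_le_limsup (by isBoundedDefault) (by isBoundedDefault)) hls.le) zero_le
    have htd : Tendsto (fun n => ((ν n : Measure (EuclideanSpace ℝ (Fin d))) (C k))) atTop
        (nhds 0) := tendsto_of_liminf_eq_limsup hli hls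
    have := (ENNReal.tendsto_toReal (by simp : (0 : ENNReal) ≠ ⊤)).comp htd
    simpa [Function.comp_def] using this
  -- SLLN helper
  have hSLLN : ∀ F : E → ℝ, Measurable F → Integrable F μ →
      ∀ᵐ ω ∂P, Tendsto (fun n : ℕ => (1 / (n : ℝ)) * ∑ i ∈ Finset.Icc 1 n, F (X i ω))
        atTop (nhds (∫ x, F x ∂μ)) := by
    intro F hFmeas hFint
    set Y : ℕ → Ω → ℝ := fun i ω => F (X (i + 1) ω) with hY
    have hYint : Integrable (Y 0) P := by
      have := (integrable_map_measure hFmeas.aestronglyMeasurable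
        (hXmeas 1).aemeasurable).mp (by rwa [hXdist 1])
      exact this
    have hYindep : Pairwise (Function.onFun (IndepFun · · P) Y) := by
      intro i j hij
      exact (hXindep.indepFun (by omega : i + 1 ≠ j + 1)).comp hFmeas hFmeas
    have hYident : ∀ i, IdentDistrib (Y i) (Y 0) P P := by
      intro i
      refine ⟨(hFmeas.comp (hXmeas (i + 1))).aemeasurable,
        (hFmeas.comp (hXmeas 1)).aemeasurable, ?_⟩
      show Measure.map (F ∘ X (i + 1)) P = Measure.map (F ∘ X 1) P
      rw [← Measure.map_map hFmeas (hXmeas (i + 1)), ← Measure.map_map hFmeas (hXmeas 1),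
        hXdist (i + 1), hXdist 1]
    have hEY : (∫ ω, Y 0 ω ∂P) = ∫ x, F x ∂μ := by
      rw [← hXdist 1, integral_map (hXmeas 1).aemeasurable hFmeas.aestronglyMeasurable]
    have := strong_law_ae_real Y hYint hYindep hYident
    filter_upwards [this] with ω hω
    rw [hEY] at hω
    refine hω.congr fun n => ?_
    rw [show Finset.Icc 1 n = Finset.Ico 1 (n + 1) by rw [Finset.Ico_add_one_right_eq_Icc],
      Finset.sum_Ico_eq_sum_range]
    simp only [Nat.add_sub_cancel]
    rw [div_eq_inv_mul, ← one_div]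
    congr 1
    exact Finset.sum_congr rfl fun i _ => by simp [hY, Nat.add_comm]
  -- integrability and measurability of the limiting integrand
  have hℓθs : Measurable (fun x => ℓ θs x) :=
    hℓmeas.comp (measurable_const.prodMk measurable_id)
  have hℓθsint : Integrable (fun x => ℓ θs x) μ := by
    refine Integrable.mono' hsupint hℓθs.aestronglyMeasurable ?_
    filter_upwards with x
    rw [Real.norm_eq_abs]
    exact hle_h x θs hθs
  filter_upwards [hSLLN h hsupmeas hsupint, hSLLN (fun x => ℓ θs x) hℓθs hℓθsint,
    ae_all_iff.2 fun k => hSLLN (G k) (hGmeas k) (hGint k)] with ω hH hT hGs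
  have hRlim : Tendsto (fun n : ℕ => (1 / (n : ℝ)) *
      ∑ i ∈ Finset.Icc 1 n,
        ((∫ θ, ℓ θ (X i ω) ∂(ν n : Measure (EuclideanSpace ℝ (Fin d)))) - ℓ θs (X i ω)))
      atTop (nhds 0) := by
    rw [NormedAddCommGroup.tendsto_nhds_zero]
    intro ε εpos
    set L := ∫ x, h x ∂μ with hL
    have hLnn : 0 ≤ L := integral_nonneg h_nonneg
    obtain ⟨k, hk⟩ : ∃ k, ∫ x, G k x ∂μ < ε / 4 :=
      (hIGtendsto.eventually_lt_const (by positivity : (0 : ℝ) < ε / 4)).exists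
    have ev1 : ∀ᶠ n : ℕ in atTop,
        (1 / (n : ℝ)) * ∑ i ∈ Finset.Icc 1 n, G k (X i ω) < ε / 2 :=
      (hGs k).eventually_lt_const (by linarith)
    have ev2 : ∀ᶠ n : ℕ in atTop,
        (1 / (n : ℝ)) * ∑ i ∈ Finset.Icc 1 n, h (X i ω) < L + 1 :=
      hH.eventually_lt_const (by linarith)
    have ev3 : ∀ᶠ n : ℕ in atTop,
        ((ν n : Measure (EuclideanSpace ℝ (Fin d))) (C k)).toReal < ε / (4 * (L + 1)) :=
      (hCtendsto k).eventually_lt_const (by positivity)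
    filter_upwards [ev1, ev2, ev3] with n h1 h2 h3
    have hnn : (0 : ℝ) ≤ 1 / (n : ℝ) := by positivity
    set c := ((ν n : Measure (EuclideanSpace ℝ (Fin d))) (C k)).toReal with hc
    have hcnn : 0 ≤ c := ENNReal.toReal_nonneg
    have hHnn : 0 ≤ (1 / (n : ℝ)) * ∑ i ∈ Finset.Icc 1 n, h (X i ω) :=
      mul_nonneg hnn (Finset.sum_nonneg fun i _ => h_nonneg _)
    have hUnn : 0 ≤ (1 / (n : ℝ)) * ∑ i ∈ Finset.Icc 1 n, G k (X i ω) :=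
      mul_nonneg hnn (Finset.sum_nonneg fun i _ => hG_nonneg _ _)
    rw [Real.norm_eq_abs]
    have hRn : |(1 / (n : ℝ)) * ∑ i ∈ Finset.Icc 1 n,
          ((∫ θ, ℓ θ (X i ω) ∂(ν n : Measure (EuclideanSpace ℝ (Fin d)))) - ℓ θs (X i ω))| ≤
        (1 / (n : ℝ)) * ∑ i ∈ Finset.Icc 1 n, G k (X i ω)
          + 2 * c * ((1 / (n : ℝ)) * ∑ i ∈ Finset.Icc 1 n, h (X i ω)) := by
      calc |(1 / (n : ℝ)) * ∑ i ∈ Finset.Icc 1 n,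
            ((∫ θ, ℓ θ (X i ω) ∂(ν n : Measure (EuclideanSpace ℝ (Fin d)))) - ℓ θs (X i ω))|
          ≤ (1 / (n : ℝ)) * ∑ i ∈ Finset.Icc 1 n,
            |(∫ θ, ℓ θ (X i ω) ∂(ν n : Measure (EuclideanSpace ℝ (Fin d)))) - ℓ θs (X i ω)| := by
            rw [abs_mul, abs_of_nonneg hnn]
            exact mul_le_mul_of_nonneg_left (Finset.abs_sum_le_sum_abs _ _) hnn
        _ ≤ (1 / (n : ℝ)) * ∑ i ∈ Finset.Icc 1 n, (G k (X i ω) + 2 * h (X i ω) * c) :=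
            mul_le_mul_of_nonneg_left
              (Finset.sum_le_sum fun i _ => hkey n k (X i ω)) hnn
        _ = (1 / (n : ℝ)) * ∑ i ∈ Finset.Icc 1 n, G k (X i ω)
            + 2 * c * ((1 / (n : ℝ)) * ∑ i ∈ Finset.Icc 1 n, h (X i ω)) := by
            rw [Finset.sum_add_distrib, mul_add]
            congr 1
            rw [Finset.mul_sum, Finset.mul_sum, Finset.mul_sum]
            exact Finset.sum_congr rfl fun i _ => by ring
    refine lt_of_le_of_lt hRn ?_
    have hbd : 2 * c * ((1 / (n : ℝ)) * ∑ i ∈ Finset.Icc 1 n, h (X i ω)) < ε / 2 := by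
      have hcb : c < ε / (4 * (L + 1)) := h3
      have hLp : (0 : ℝ) < L + 1 := by linarith
      calc 2 * c * ((1 / (n : ℝ)) * ∑ i ∈ Finset.Icc 1 n, h (X i ω))
          ≤ 2 * c * (L + 1) := by nlinarith
        _ < 2 * (ε / (4 * (L + 1))) * (L + 1) := by nlinarith
        _ = ε / 2 := by field_simp; ring
    linarith
  have hfinal := hT.add hRlim
  rw [add_zero] at hfinal
  refine hfinal.congr fun n => ?_
  rw [← mul_add, ← Finset.sum_add_distrib]
  congr 1
  exact Finset.sum_congr rfl fun i _ => by ring
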